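/- For every constant 0 < ε < 1 and every constant c ≥ 1, there exists a constant α > 0 such that the following holds for every field F and all integers m ≥ n ≥ 2: if M ∈ F^{m×n} admits no factorization M = Q·P with Q ∈ F^{m×s}, s ≤ n/(1−ε), each row of Q having at most (log n)^c nonzero entries, and P ∈ F^{s×n}, then M contains a submatrix M' ∈ F^{m×n'}, formed by n' ≥ α·(log n)^{c−1} of the columns of M, which is (m, n', ε·n', α·(log n)^{c−1})-row rigid. -/

import Mathlib

noncomputable def rnd (ε : ℝ) (a : ℕ) : ℕ :=
  if a = 0 then 0 else ⌊Real.log a / Real.log ε⁻¹⌋₊ + 1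

lemma rnd_succ_le (ε : ℝ) (hε0 : 0 < ε) (hε1 : ε < 1) {g a : ℕ}
    (hg : (g : ℝ) < ε * a) (ha : 0 < a) : rnd ε g + 1 ≤ rnd ε a := by
  have hK : 0 < Real.log ε⁻¹ := by
    rw [Real.log_inv]
    have := Real.log_neg hε0 hε1
    linarith
  have ha' : rnd ε a = ⌊Real.log a / Real.log ε⁻¹⌋₊ + 1 := by
    simp [rnd, ha.ne']
  rcases Nat.eq_zero_or_pos g with hg0 | hg0
  · rw [ha']
    simp [rnd, hg0]
  · have hg' : rnd ε g = ⌊Real.log g / Real.log ε⁻¹⌋₊ + 1 := by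
      simp [rnd, hg0.ne']
    rw [hg', ha']
    have key : (⌊Real.log g / Real.log ε⁻¹⌋₊ + 1 : ℕ) ≤ ⌊Real.log a / Real.log ε⁻¹⌋₊ := by
      apply Nat.le_floor
      have hga : (1:ℝ) ≤ g := by exact_mod_cast hg0
      have h1 : Real.log g ≤ Real.log (ε * a) :=
        Real.log_le_log (by linarith) (le_of_lt hg)
      have h2 : Real.log (ε * a) = Real.log ε + Real.log a := by
        refine Real.log_mul (ne_of_gt hε0) ?_
        have : (0:ℝ) < a := by exact_mod_cast ha
        exact ne_of_gt this
      have h3 : Real.log g + Real.log ε⁻¹ ≤ Real.log a := by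
        rw [Real.log_inv]; rw [h2] at h1; linarith
      have h4 : (⌊Real.log g / Real.log ε⁻¹⌋₊ : ℝ) ≤ Real.log g / Real.log ε⁻¹ := by
        apply Nat.floor_le
        apply div_nonneg _ (le_of_lt hK)
        exact Real.log_nonneg hga
      push_cast
      rw [← sub_nonneg]
      have h5 : Real.log g / Real.log ε⁻¹ + 1 ≤ Real.log a / Real.log ε⁻¹ := by
        rw [div_add' _ _ _ (ne_of_gt hK), div_le_div_iff₀ hK hK]
        nlinarith
      linarith
    omega

open Matrix Submodule in
lemma rec_factor {F : Type} [Field F] {m n : ℕ}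
    (M : Matrix (Fin m) (Fin n) F)
    (ε t β : ℝ) (hε0 : 0 < ε) (hε1 : ε < 1) (ht : 0 ≤ t) (hβ : 0 < β)
    (hnr : ∀ (a : ℕ) (f : Fin a → Fin n), β ≤ (a : ℝ) →
      ∃ N : Matrix (Fin m) (Fin a) F,
        (∀ i, (({j | M.submatrix id f i j ≠ N i j}).ncard : ℝ) ≤ t) ∧
        ((N.rank : ℝ) < ε * a)) :
    ∀ (a : ℕ) (f : Fin a → Fin n),
      ∃ (s' : ℕ) (Q : Matrix (Fin m) (Fin s') F) (P : Matrix (Fin s') (Fin a) F),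
        ((s' : ℝ) ≤ a / (1 - ε)) ∧
        (∀ i, (({j | Q i j ≠ 0}).ncard : ℝ) ≤ β + t * (rnd ε a)) ∧
        M.submatrix id f = Q * P := by
  have h1ε : 0 < 1 - ε := by linarith
  intro a
  induction a using Nat.strong_induction_on with
  | _ a IH =>
  intro f
  by_cases hsmall : (a : ℝ) < β
  · -- base case: take Q to be the submatrix itself
    refine ⟨a, M.submatrix id f, 1, ?_, ?_, (Matrix.mul_one _).symm⟩
    · rw [le_div_iff₀ h1ε]
      have hc : (0:ℝ) ≤ (a:ℝ) := Nat.cast_nonneg a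
      nlinarith
    · intro i
      have hle : ({j | M.submatrix id f i j ≠ 0}).ncard ≤ a := by
        have := Set.ncard_le_ncard (Set.subset_univ {j | M.submatrix id f i j ≠ 0})
          Set.finite_univ
        simpa [Set.ncard_univ] using this
      have h2 : (0:ℝ) ≤ t * (rnd ε a) := mul_nonneg ht (Nat.cast_nonneg _)
      have h3 : (({j | M.submatrix id f i j ≠ 0}).ncard : ℝ) ≤ a := by exact_mod_cast hle
      linarith
  · push_neg at hsmall
    have ha0 : 0 < a := by
      rcases Nat.eq_zero_or_pos a with h | h
      · subst h; norm_num at hsmall; linarith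
      · exact h
    obtain ⟨N, hNs, hNr⟩ := hnr a f hsmall
    obtain ⟨b, hbsub, hbspan, hbli⟩ := exists_linearIndependent F (Set.range Nᵀ)
    have hbfin : b.Finite := (Set.finite_range Nᵀ).subset hbsub
    haveI : Fintype b := hbfin.fintype
    set g := Fintype.card b with hgdef
    have hrank : N.rank = g := by
      rw [Matrix.rank_eq_finrank_span_cols, show Set.range N.col = Set.range Nᵀ from rfl, ← hbspan, finrank_span_set_eq_card hbli,
        Set.toFinset_card]
    have hg : (g : ℝ) < ε * a := by rw [← hrank]; exact_mod_cast hNr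
    have hga : g < a := by
      have h1 : (g : ℝ) < a := by nlinarith [Nat.cast_nonneg (α := ℝ) a]
      exact_mod_cast h1
    -- enumerate the basis columns
    set e : Fin g → b := ⇑(Fintype.equivFin b).symm with hedef
    have hmem : ∀ l : Fin g, ((e l : Fin m → F)) ∈ Set.range Nᵀ := fun l => hbsub (e l).2
    choose C' hC' using hmem
    -- coefficients
    have hrange : Set.range (fun l : Fin g => ((e l : Fin m → F))) = b := by
      exact (Function.Surjective.range_comp
        ((Fintype.equivFin b).symm.surjective) (Subtype.val : b → (Fin m → F))).trans
        Subtype.range_coe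
    have hcol : ∀ j : Fin a, Nᵀ j ∈ span F (Set.range fun l : Fin g => ((e l : Fin m → F))) := by
      intro j
      rw [hrange, hbspan]
      exact subset_span ⟨j, rfl⟩
    choose Λ hΛ using fun j => (mem_span_range_iff_exists_fun F).mp (hcol j)
    have hΛ' : ∀ j i, (∑ l, Λ j l * N i (C' l)) = N i j := by
      intro j i
      have h := congrFun (hΛ j) i
      simp only [Finset.sum_apply, Pi.smul_apply, smul_eq_mul] at h
      calc ∑ l, Λ j l * N i (C' l) = ∑ l, Λ j l * (e l : Fin m → F) i := by
            apply Finset.sum_congr rfl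
            intro l _
            rw [← hC' l]
            rfl
        _ = N i j := h
    -- recursive call
    obtain ⟨s₂, Q₂, P₂, hs₂, hsp₂, hfac₂⟩ := IH g hga (f ∘ C')
    set S : Matrix (Fin m) (Fin a) F := M.submatrix id f - N with hSdef
    set Q : Matrix (Fin m) (Fin (s₂ + a)) F :=
      Matrix.of (fun i => Fin.append (fun k => Q₂ i k) (fun k => S i k)) with hQdef
    set P : Matrix (Fin (s₂ + a)) (Fin a) F :=
      Matrix.of (fun k j => Fin.addCases (motive := fun _ => F)
        (fun k₂ => ∑ l, P₂ k₂ l * Λ j l)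
        (fun ka => (if j = ka then (1:F) else 0) - ∑ l, if C' l = ka then Λ j l else 0) k)
      with hPdef
    refine ⟨s₂ + a, Q, P, ?_, ?_, ?_⟩
    · -- size bound
      rw [le_div_iff₀ h1ε] at hs₂ ⊢
      push_cast
      nlinarith
    · -- sparsity bound
      intro i
      have hset : {j | Q i j ≠ 0} ⊆
          (Fin.castAdd a '' {k | Q₂ i k ≠ 0}) ∪ (Fin.natAdd s₂ '' {k | S i k ≠ 0}) := by
        intro j hj
        refine Fin.addCases (motive := fun j => Q i j ≠ 0 →
          j ∈ (Fin.castAdd a '' {k | Q₂ i k ≠ 0}) ∪ (Fin.natAdd s₂ '' {k | S i k ≠ 0}))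
          (fun k₂ hk => ?_) (fun ka hk => ?_) j hj
        · left
          refine ⟨k₂, ?_, rfl⟩
          simpa [hQdef, Fin.append_left] using hk
        · right
          refine ⟨ka, ?_, rfl⟩
          simpa [hQdef, Fin.append_right] using hk
      have hnatinj : Function.Injective (Fin.natAdd s₂ : Fin a → Fin (s₂ + a)) := by
        intro x y hxy
        have := congrArg Fin.val hxy
        simp [Fin.ext_iff] at this ⊢
        omega
      have hcount : ({j | Q i j ≠ 0}).ncard ≤
          ({k | Q₂ i k ≠ 0}).ncard + ({k | S i k ≠ 0}).ncard := by
        calc ({j | Q i j ≠ 0}).ncard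
            ≤ ((Fin.castAdd a '' {k | Q₂ i k ≠ 0}) ∪
                (Fin.natAdd s₂ '' {k | S i k ≠ 0})).ncard :=
              Set.ncard_le_ncard hset (Set.Finite.union
                (Set.toFinite _) (Set.toFinite _))
          _ ≤ (Fin.castAdd a '' {k | Q₂ i k ≠ 0}).ncard +
                (Fin.natAdd s₂ '' {k | S i k ≠ 0}).ncard := Set.ncard_union_le _ _
          _ = ({k | Q₂ i k ≠ 0}).ncard + ({k | S i k ≠ 0}).ncard := by
              rw [Set.ncard_image_of_injective _ (Fin.castAdd_injective s₂ a),
                Set.ncard_image_of_injective _ hnatinj]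
      have hScount : (({k | S i k ≠ 0}).ncard : ℝ) ≤ t := by
        have : {k | S i k ≠ 0} = {k | M.submatrix id f i k ≠ N i k} := by
          ext k
          simp [hSdef, sub_ne_zero]
        rw [this]
        exact hNs i
      have hr : (rnd ε g : ℝ) + 1 ≤ (rnd ε a : ℝ) := by
        exact_mod_cast rnd_succ_le ε hε0 hε1 hg ha0
      have h1 : (({j | Q i j ≠ 0}).ncard : ℝ) ≤
          (({k | Q₂ i k ≠ 0}).ncard : ℝ) + (({k | S i k ≠ 0}).ncard : ℝ) := by
        exact_mod_cast hcount
      have h2 := hsp₂ i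
      nlinarith [mul_nonneg ht (Nat.cast_nonneg (α := ℝ) (rnd ε g))]
    · -- factorization
      ext i j
      rw [Matrix.mul_apply, Fin.sum_univ_add]
      have hQl : ∀ k₂ : Fin s₂, Q i (Fin.castAdd a k₂) = Q₂ i k₂ := fun k₂ => by
        simp [hQdef, Fin.append_left]
      have hQr : ∀ ka : Fin a, Q i (Fin.natAdd s₂ ka) = S i ka := fun ka => by
        simp [hQdef, Fin.append_right]
      have hPl : ∀ k₂ : Fin s₂, P (Fin.castAdd a k₂) j = ∑ l, P₂ k₂ l * Λ j l := fun k₂ => by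
        simp [hPdef, Fin.addCases_left]
      have hPr : ∀ ka : Fin a, P (Fin.natAdd s₂ ka) j =
          (if j = ka then (1:F) else 0) - ∑ l, if C' l = ka then Λ j l else 0 := fun ka => by
        simp [hPdef, Fin.addCases_right]
      have hsum1 : ∑ k₂ : Fin s₂, Q i (Fin.castAdd a k₂) * P (Fin.castAdd a k₂) j
          = ∑ l, M i (f (C' l)) * Λ j l := by
        simp only [hQl, hPl, Finset.mul_sum]
        rw [Finset.sum_comm]
        apply Finset.sum_congr rfl
        intro l _
        have hfac : (Q₂ * P₂) i l = M i (f (C' l)) := by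
          rw [← hfac₂]
          rfl
        rw [← hfac, Matrix.mul_apply, Finset.sum_mul]
        apply Finset.sum_congr rfl
        intro k₂ _
        ring
      have hsum2 : ∑ ka : Fin a, Q i (Fin.natAdd s₂ ka) * P (Fin.natAdd s₂ ka) j
          = S i j - ∑ l, Λ j l * S i (C' l) := by
        simp only [hQr, hPr, mul_sub, Finset.sum_sub_distrib]
        congr 1
        · simp only [mul_ite, mul_one, mul_zero]
          rw [Finset.sum_ite_eq]
          simp
        · simp only [Finset.mul_sum, mul_ite, mul_zero]
          rw [Finset.sum_comm]
          apply Finset.sum_congr rfl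
          intro l _
          rw [Finset.sum_ite_eq]
          simp [mul_comm]
      have hM' : ∀ k, M i (f k) = S i k + N i k := by
        intro k
        simp [hSdef]
      have e1 : ∑ l, M i (f (C' l)) * Λ j l = (∑ l, Λ j l * S i (C' l)) + N i j := by
        rw [← hΛ' j i, ← Finset.sum_add_distrib]
        apply Finset.sum_congr rfl
        intro l _
        rw [hM']
        ring
      rw [hsum1, hsum2, e1]
      have : M.submatrix id f i j = M i (f j) := rfl
      rw [this, hM' j]
      ring


/-- `M` is `(m,n,r,t)`-row rigid (with real parameters): every matrix differing from `M`
in at most `t` entries in each row has rank at least `r`. -/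
def RowRigidR {F : Type*} [Field F] {m n : ℕ} (r t : ℝ)
    (M : Matrix (Fin m) (Fin n) F) : Prop :=
  ∀ N : Matrix (Fin m) (Fin n) F,
    (∀ i, ({j | M i j ≠ N i j}.ncard : ℝ) ≤ t) → r ≤ (N.rank : ℝ)

/-- poly-logarithmic lower bounds: for all constants `0 < ε < 1` and
`c ≥ 1` there is `α > 0` such that for every field `F` and all `m ≥ n ≥ 2`: if
`M ∈ F^{m×n}` admits no factorization `M = Q * P` with `s ≤ n/(1-ε)` and each row of
`Q` having at most `(log n)^c` nonzero entries, then `M` contains a submatrix on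
`n' ≥ α·(log n)^{c-1}` of its columns that is `(m, n', ε·n', α·(log n)^{c-1})`-row
rigid. -/
theorem polylog_lds_lower_bound_gives_rigid_submatrix
    (ε : ℝ) (hε0 : 0 < ε) (hε1 : ε < 1) (c : ℝ) (hc : 1 ≤ c) :
    ∃ α : ℝ, 0 < α ∧
      ∀ (F : Type) (_ : Field F) (m n : ℕ), 2 ≤ n → n ≤ m →
        ∀ M : Matrix (Fin m) (Fin n) F,
          (¬ ∃ (s : ℕ) (Q : Matrix (Fin m) (Fin s) F) (P : Matrix (Fin s) (Fin n) F),
            (s : ℝ) ≤ (n : ℝ) / (1 - ε) ∧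
            (∀ i, ({j | Q i j ≠ 0}.ncard : ℝ) ≤ (Real.logb 2 n) ^ c) ∧
            M = Q * P) →
          ∃ (n' : ℕ) (f : Fin n' → Fin n),
            α * (Real.logb 2 n) ^ (c - 1) ≤ (n' : ℝ) ∧
            RowRigidR (ε * n') (α * (Real.logb 2 n) ^ (c - 1)) (M.submatrix id f) := by
  have hK : 0 < Real.log ε⁻¹ := by
    rw [Real.log_inv]
    have := Real.log_neg hε0 hε1
    linarith
  have hlog2 : 0 < Real.log 2 := Real.log_pos (by norm_num)
  set K := Real.log ε⁻¹ with hKdef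
  have hDpos : 0 < 2 + Real.log 2 / K := by positivity
  refine ⟨(2 + Real.log 2 / K)⁻¹, by positivity, ?_⟩
  intro F _ m n hn2 hnm M hM
  set α : ℝ := (2 + Real.log 2 / K)⁻¹ with hαdef
  have hα0 : 0 < α := by positivity
  set b : ℝ := Real.logb 2 n with hbdef
  have hb1 : (1 : ℝ) ≤ b := by
    rw [hbdef, Real.logb, le_div_iff₀ hlog2, one_mul]
    apply Real.log_le_log (by norm_num)
    exact_mod_cast hn2
  have hb0 : (0:ℝ) < b := by linarith
  set L : ℝ := b ^ (c - 1) with hLdef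
  have hL1 : (1:ℝ) ≤ L := Real.one_le_rpow hb1 (by linarith)
  have hαL0 : 0 < α * L := by positivity
  by_contra hcon
  push_neg at hcon
  have hnr : ∀ (a : ℕ) (f : Fin a → Fin n), α * L ≤ (a : ℝ) →
      ∃ N : Matrix (Fin m) (Fin a) F,
        (∀ i, (({j | M.submatrix id f i j ≠ N i j}).ncard : ℝ) ≤ α * L) ∧
        ((N.rank : ℝ) < ε * a) := by
    intro a f ha
    have h := hcon a f ha
    unfold RowRigidR at h
    push_neg at h
    exact h
  obtain ⟨s', Q, P, hs', hsp, hfac⟩ :=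
    rec_factor M ε (α * L) (α * L) hε0 hε1 (le_of_lt hαL0) hαL0 hnr n id
  apply hM
  refine ⟨s', Q, P, hs', ?_, ?_⟩
  · intro i
    have hn0 : (n : ℕ) ≠ 0 := by omega
    have hlogn0 : (0:ℝ) ≤ Real.log n := by
      apply Real.log_nonneg
      have : (2:ℝ) ≤ n := by exact_mod_cast hn2
      linarith
    have hrnd : ((rnd ε n : ℕ) : ℝ) ≤ Real.log n / K + 1 := by
      rw [rnd, if_neg hn0]
      push_cast
      have := Nat.floor_le (div_nonneg hlogn0 (le_of_lt hK))
      linarith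
    have hlogn : Real.log n = b * Real.log 2 := by
      rw [hbdef, Real.logb]
      field_simp
    have hinv : α * (2 + Real.log 2 / K) = 1 := inv_mul_cancel₀ (ne_of_gt hDpos)
    have hLb : b ^ c = L * b := by
      rw [hLdef, ← Real.rpow_add_one (ne_of_gt hb0) (c - 1)]
      ring_nf
    have h1 := hsp i
    have hchain : α * L + α * L * ((rnd ε n : ℕ) : ℝ) ≤ b ^ c := by
      have h2 : α * L + α * L * ((rnd ε n : ℕ) : ℝ) ≤ α * L * (2 + b * Real.log 2 / K) := by
        have := mul_le_mul_of_nonneg_left hrnd (le_of_lt hαL0)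
        rw [hlogn] at this
        nlinarith
      have h3 : α * L * (2 + b * Real.log 2 / K) ≤ α * L * (b * (2 + Real.log 2 / K)) := by
        apply mul_le_mul_of_nonneg_left _ (le_of_lt hαL0)
        have hq : b * (2 + Real.log 2 / K) - (2 + b * Real.log 2 / K) = 2 * (b - 1) := by
          ring
        linarith
      have h4 : α * L * (b * (2 + Real.log 2 / K)) = L * b := by
        calc α * L * (b * (2 + Real.log 2 / K)) = (α * (2 + Real.log 2 / K)) * (L * b) := by ring
          _ = L * b := by rw [hinv, one_mul]
      rw [hLb]
      linarith
    exact le_trans h1 hchain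
  · rw [Matrix.submatrix_id_id] at hfac
    exact hfac
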